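/- Let Λ = diag(λ₁,…,λ_M), λᵢ > 0, ρ > 0, and let V ∈ ℂ^{M×L} have orthonormal columns. Then tr((Λ⁻¹ + ρ V Vᴴ)⁻¹) ≥ tr(Λ) − Σ_{l=1}^{L} λ_l²/(λ_l + 1/ρ), where λ₁ ≥ … ≥ λ_M, with equality when V consists of the first L standard basis vectors. -/

import Mathlib

open Matrix
open scoped ComplexOrder



lemma card_filter_lt16 (M L : ℕ) (hLM : L ≤ M) :
    ∑ i : Fin M, (if (i : ℕ) < L then (1 : ℝ) else 0) = L := by
  rw [Fin.sum_univ_eq_sum_range (fun i => if i < L then (1:ℝ) else 0), Finset.sum_boole]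
  congr 1
  rw [Finset.filter_congr_decidable]
  have : (Finset.range M).filter (· < L) = Finset.range L := by
    ext x
    simp only [Finset.mem_filter, Finset.mem_range]
    exact ⟨fun h => h.2, fun h => ⟨lt_of_lt_of_le h hLM, h⟩⟩
  rw [this, Finset.card_range]

lemma aux_sum16 (M L : ℕ) (hLM : L ≤ M) (g t : Fin M → ℝ)
    (hg0 : ∀ i, 0 ≤ g i) (hganti : ∀ i j : Fin M, i ≤ j → g j ≤ g i)
    (ht0 : ∀ i, 0 ≤ t i) (ht1 : ∀ i, t i ≤ 1) (hts : ∑ i, t i = L) :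
    ∑ i, g i * t i ≤ ∑ i ∈ Finset.univ.filter (fun i : Fin M => (i : ℕ) < L), g i := by
  rcases eq_or_lt_of_le hLM with hEq | hLt
  · have hfilt : Finset.univ.filter (fun i : Fin M => (i : ℕ) < L) = Finset.univ := by
      apply Finset.filter_true_of_mem
      intro i _
      exact hEq ▸ i.isLt
    rw [hfilt]
    apply Finset.sum_le_sum
    intro i _
    calc g i * t i ≤ g i * 1 := mul_le_mul_of_nonneg_left (ht1 i) (hg0 i)
      _ = g i := mul_one _
  · set θ := g ⟨L, hLt⟩ with hθ
    have key : ∀ i : Fin M, g i * t i - (if (i : ℕ) < L then g i else 0)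
        ≤ θ * (t i - (if (i : ℕ) < L then 1 else 0)) := by
      intro i
      by_cases h : (i : ℕ) < L
      · simp only [h, if_pos]
        have hgi : θ ≤ g i := hganti i ⟨L, hLt⟩ (by simpa [Fin.le_def] using h.le)
        nlinarith [ht1 i, ht0 i, hg0 i]
      · simp only [h, if_neg, not_false_iff, sub_zero]
        have hgi : g i ≤ θ := hganti ⟨L, hLt⟩ i (by simpa [Fin.le_def] using not_lt.mp h)
        nlinarith [ht0 i, hg0 ⟨L, hLt⟩]
    have hsum := Finset.sum_le_sum (fun i (_ : i ∈ Finset.univ) => key i)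
    rw [Finset.sum_sub_distrib] at hsum
    rw [← Finset.sum_filter] at hsum
    have h2 : ∑ i : Fin M, θ * (t i - (if (i : ℕ) < L then 1 else 0)) = 0 := by
      rw [← Finset.mul_sum, Finset.sum_sub_distrib, hts, card_filter_lt16 M L hLM]
      ring
    rw [h2] at hsum
    linarith



theorem stmt16 (M L : ℕ) (hLM : L ≤ M) (lam : Fin M → ℝ) (hpos : ∀ i, 0 < lam i)
    (hdec : ∀ i j : Fin M, i ≤ j → lam j ≤ lam i) (ρ : ℝ) (hρ : 0 < ρ)
    (Λ : Matrix (Fin M) (Fin M) ℂ) (hΛ : Λ = Matrix.diagonal fun i => (lam i : ℂ))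
    (V : Matrix (Fin M) (Fin L) ℂ) (hV : Vᴴ * V = 1)
    (V₀ : Matrix (Fin M) (Fin L) ℂ)
    (hV₀ : V₀ = Matrix.of fun (i : Fin M) (j : Fin L) => if (i : ℕ) = (j : ℕ) then 1 else 0) :
    (Matrix.trace Λ -
        ((∑ l ∈ Finset.univ.filter (fun i : Fin M => (i : ℕ) < L),
            lam l ^ 2 / (lam l + 1 / ρ) : ℝ) : ℂ) ≤
      Matrix.trace ((Λ⁻¹ + (ρ : ℂ) • (V * Vᴴ))⁻¹)) ∧
    Matrix.trace ((Λ⁻¹ + (ρ : ℂ) • (V₀ * V₀ᴴ))⁻¹) =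
      Matrix.trace Λ -
        ((∑ l ∈ Finset.univ.filter (fun i : Fin M => (i : ℕ) < L),
            lam l ^ 2 / (lam l + 1 / ρ) : ℝ) : ℂ) := by
  constructor
  · -- inequality part
      set c : ℝ := 1 / ρ with hc
      have hcpos : 0 < c := by positivity
      have hec : ∀ i, 0 < lam i + c := fun i => by have := hpos i; positivity
      set E : Matrix (Fin M) (Fin M) ℂ := Matrix.diagonal fun i => ((lam i + c : ℝ) : ℂ) with hE
      set B : Matrix (Fin L) (Fin L) ℂ := Vᴴ * (E * V) with hB
      -- Positivity facts
      have hEpd : E.PosDef := Matrix.PosDef.diagonal fun i => Complex.zero_lt_real.mpr (hec i)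
      have hΛpd : Λ.PosDef := by
        rw [hΛ]; exact Matrix.PosDef.diagonal fun i => Complex.zero_lt_real.mpr (hpos i)
      have hΛdet : IsUnit Λ.det := hΛpd.det_pos.ne'.isUnit
      have hVinj : ∀ x : Fin L → ℂ, x ≠ 0 → V *ᵥ x ≠ 0 := by
        intro x hx h
        apply hx
        have : Vᴴ *ᵥ (V *ᵥ x) = x := by rw [Matrix.mulVec_mulVec, hV, Matrix.one_mulVec]
        rw [← this, h, Matrix.mulVec_zero]
      have hBpd : B.PosDef := by
        refine Matrix.PosDef.of_dotProduct_mulVec_pos ?_ ?_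
        · rw [hB, ← Matrix.mul_assoc]
          exact Matrix.isHermitian_conjTranspose_mul_mul V hEpd.1
        · intro x hx
          rw [hB, ← Matrix.mul_assoc]
          simpa only [Matrix.star_mulVec, Matrix.dotProduct_mulVec, Matrix.vecMul_vecMul]
            using hEpd.dotProduct_mulVec_pos (hVinj x hx)
      have hBdet : IsUnit B.det := hBpd.det_pos.ne'.isUnit
      have hBBinv : B * B⁻¹ = 1 := Matrix.mul_nonsing_inv B hBdet
      have hΛinvΛ : Λ⁻¹ * Λ = 1 := Matrix.nonsing_inv_mul Λ hΛdet
      -- E = Λ + c • 1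
      have hEeq : E = Λ + ((c : ℂ)) • 1 := by
        rw [hE, hΛ]
        ext i j
        by_cases hij : i = j
        · subst hij
          simp only [Matrix.add_apply, Matrix.smul_apply, Matrix.diagonal_apply_eq,
            Matrix.one_apply_eq, smul_eq_mul, mul_one]
          push_cast; ring
        · simp [Matrix.add_apply, Matrix.smul_apply, Matrix.diagonal_apply_ne _ hij,
            Matrix.one_apply_ne hij]
      have hVΛV : Vᴴ * (Λ * V) = B - (c : ℂ) • 1 := by
        rw [hB, hEeq, Matrix.add_mul, Matrix.mul_add, Matrix.smul_mul, Matrix.one_mul,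
          Matrix.mul_smul, hV]
        abel
      have hrc : (ρ : ℂ) * (c : ℂ) = 1 := by
        rw [hc]; push_cast; field_simp
      -- Woodbury
      set W : Matrix (Fin M) (Fin M) ℂ := V * (B⁻¹ * (Vᴴ * Λ)) with hW
      have hwood : (Λ⁻¹ + (ρ : ℂ) • (V * Vᴴ)) * (Λ - Λ * W) = 1 := by
        have h1 : Λ⁻¹ * (Λ * W) = W := by rw [← Matrix.mul_assoc, hΛinvΛ, Matrix.one_mul]
        have h2 : V * Vᴴ * (Λ * W) = V * (Vᴴ * Λ) - (c : ℂ) • W := by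
          have e1 : V * Vᴴ * (Λ * W) = V * ((Vᴴ * (Λ * V)) * (B⁻¹ * (Vᴴ * Λ))) := by
            simp only [hW, Matrix.mul_assoc]
          rw [e1, hVΛV, Matrix.sub_mul, Matrix.smul_mul, Matrix.one_mul, ← Matrix.mul_assoc,
            hBBinv, Matrix.one_mul, Matrix.mul_sub, Matrix.mul_smul, hW]
        rw [Matrix.add_mul, Matrix.mul_sub, Matrix.mul_sub, hΛinvΛ, h1, Matrix.smul_mul,
          Matrix.smul_mul, h2, smul_sub, smul_smul, hrc, one_smul]
        simp only [Matrix.mul_assoc]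
        abel
      have hinv : (Λ⁻¹ + (ρ : ℂ) • (V * Vᴴ))⁻¹ = Λ - Λ * W :=
        Matrix.inv_eq_right_inv hwood
      -- trace reduction
      set C : Matrix (Fin L) (Fin L) ℂ := Vᴴ * (Λ * (Λ * V)) with hC
      have htr : (Λ - Λ * W).trace = Λ.trace - (B⁻¹ * C).trace := by
        rw [Matrix.trace_sub]
        congr 1
        rw [hW, hC]
        rw [show Λ * (V * (B⁻¹ * (Vᴴ * Λ))) = (Λ * V) * (B⁻¹ * (Vᴴ * Λ)) by
          simp only [Matrix.mul_assoc]]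
        rw [Matrix.trace_mul_comm]
        simp only [Matrix.mul_assoc]
      rw [hinv, htr]
      set s : ℝ := ∑ l ∈ Finset.univ.filter (fun i : Fin M => (i : ℕ) < L),
          lam l ^ 2 / (lam l + 1 / ρ) with hs
      have hkey : (B⁻¹ * C).trace ≤ (s : ℂ) := by
        set g : Fin M → ℝ := fun i => lam i ^ 2 / (lam i + c) with hg
        set S : Matrix (Fin M) (Fin M) ℂ :=
          Matrix.diagonal fun i => ((Real.sqrt (lam i + c) : ℝ) : ℂ) with hS
        set G : Matrix (Fin M) (Fin M) ℂ := Matrix.diagonal fun i => ((g i : ℝ) : ℂ) with hG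
        have hSS : S * S = E := by
          have h' : (fun i => ((Real.sqrt (lam i + c) : ℝ) : ℂ) * ((Real.sqrt (lam i + c) : ℝ) : ℂ))
              = fun i => ((lam i + c : ℝ) : ℂ) := funext fun i => by
            rw [← Complex.ofReal_mul, Real.mul_self_sqrt (hec i).le]
          rw [hS, hE, Matrix.diagonal_mul_diagonal, h']
        have hSH : Sᴴ = S := by
          have h' : (star fun i => ((Real.sqrt (lam i + c) : ℝ) : ℂ))
              = fun i => ((Real.sqrt (lam i + c) : ℝ) : ℂ) := funext fun i => by
            simp [Pi.star_apply, Complex.star_def, Complex.conj_ofReal]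
          rw [hS, Matrix.diagonal_conjTranspose, h']
        have hΛΛ : Λ * Λ = S * (G * S) := by
          have h' : ∀ i : Fin M, (lam i : ℂ) * (lam i : ℂ)
              = ((Real.sqrt (lam i + c) : ℝ) : ℂ) * (((g i : ℝ) : ℂ) * ((Real.sqrt (lam i + c) : ℝ) : ℂ)) := by
            intro i
            rw [← Complex.ofReal_mul, ← Complex.ofReal_mul, ← Complex.ofReal_mul]
            congr 1
            have h1 := hec i
            rw [show Real.sqrt (lam i + c) * (g i * Real.sqrt (lam i + c))
                = (Real.sqrt (lam i + c) * Real.sqrt (lam i + c)) * g i by ring,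
              Real.mul_self_sqrt h1.le, hg]
            field_simp
          rw [hΛ, hS, hG]
          simp only [Matrix.diagonal_mul_diagonal]
          exact congrArg Matrix.diagonal (funext h')
        -- square root of B⁻¹
        have hBips : (B⁻¹).PosSemidef := hBpd.inv.posSemidef
        obtain ⟨R, hRR, hRH⟩ : ∃ R : Matrix (Fin L) (Fin L) ℂ, R * R = B⁻¹ ∧ Rᴴ = R :=
          by
            open scoped MatrixOrder in
            exact ⟨CFC.sqrt (B⁻¹), CFC.sqrt_mul_sqrt_self _ hBips.nonneg,
              (CFC.sqrt_nonneg (B⁻¹)).posSemidef.1⟩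
        have hRdet : IsUnit R.det := by
          have : IsUnit (B⁻¹).det := hBpd.inv.det_pos.ne'.isUnit
          rw [← hRR, Matrix.det_mul] at this
          exact isUnit_of_mul_isUnit_left this
        have hRBR : R * (B * R) = 1 := by
          have hBeq : B = R⁻¹ * R⁻¹ := by
            rw [← Matrix.mul_inv_rev, hRR, Matrix.nonsing_inv_nonsing_inv B hBdet]
          rw [hBeq, Matrix.mul_assoc, Matrix.nonsing_inv_mul R hRdet, Matrix.mul_one,
            Matrix.mul_nonsing_inv R hRdet]
        set U : Matrix (Fin M) (Fin L) ℂ := S * (V * R) with hU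
        have hUH : Uᴴ = R * (Vᴴ * S) := by
          rw [hU, Matrix.conjTranspose_mul, Matrix.conjTranspose_mul, hSH, hRH,
            Matrix.mul_assoc]
        have hUU : Uᴴ * U = 1 := by
          rw [hUH, hU]
          calc R * (Vᴴ * S) * (S * (V * R)) = R * ((Vᴴ * ((S * S) * V)) * R) := by
                simp only [Matrix.mul_assoc]
            _ = 1 := by rw [hSS, ← hB, hRBR]
        have htrU : (B⁻¹ * C).trace = (G * (U * Uᴴ)).trace := by
          rw [← hRR, hC]
          calc (R * R * (Vᴴ * (Λ * (Λ * V)))).trace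
              = (R * (R * (Vᴴ * (Λ * (Λ * V))))).trace := by rw [Matrix.mul_assoc]
            _ = ((R * (Vᴴ * (Λ * (Λ * V)))) * R).trace := by
                rw [Matrix.trace_mul_comm]
            _ = (Uᴴ * (G * U)).trace := by
                rw [hUH, hU]
                congr 1
                rw [show Λ * (Λ * V) = (Λ * Λ) * V by rw [Matrix.mul_assoc], hΛΛ]
                simp only [Matrix.mul_assoc]
            _ = ((G * U) * Uᴴ).trace := by rw [Matrix.trace_mul_comm]
            _ = (G * (U * Uᴴ)).trace := by rw [Matrix.mul_assoc]
        set P : Matrix (Fin M) (Fin M) ℂ := U * Uᴴ with hP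
        set t : Fin M → ℝ := fun i => ∑ j, Complex.normSq (U i j) with ht
        have hPii : ∀ i, P i i = ((t i : ℝ) : ℂ) := by
          intro i
          rw [hP, Matrix.mul_apply, ht]
          push_cast
          apply Finset.sum_congr rfl
          intro j _
          rw [Matrix.conjTranspose_apply, Complex.star_def, Complex.mul_conj]
        have ht0 : ∀ i, 0 ≤ t i := fun i =>
          Finset.sum_nonneg fun j _ => Complex.normSq_nonneg _
        have hPP : P * P = P := by
          rw [hP]
          calc U * Uᴴ * (U * Uᴴ) = U * ((Uᴴ * U) * Uᴴ) := by simp only [Matrix.mul_assoc]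
            _ = U * Uᴴ := by rw [hUU, Matrix.one_mul]
        have hPH : Pᴴ = P := by
          rw [hP, Matrix.conjTranspose_mul, Matrix.conjTranspose_conjTranspose]
        have ht1 : ∀ i, t i ≤ 1 := by
          intro i
          have hQ : (1 - P)ᴴ * (1 - P) = 1 - P := by
            rw [Matrix.conjTranspose_sub, Matrix.conjTranspose_one, hPH, Matrix.mul_sub,
              Matrix.sub_mul, Matrix.sub_mul, hPP]
            simp only [Matrix.one_mul, Matrix.mul_one]
            abel
          have hdiag : (1 - P) i i = ((∑ j, Complex.normSq ((1 - P) j i) : ℝ) : ℂ) := by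
            conv_lhs => rw [← hQ]
            rw [Matrix.mul_apply]
            push_cast
            apply Finset.sum_congr rfl
            intro j _
            rw [Matrix.conjTranspose_apply, Complex.star_def, mul_comm, Complex.mul_conj]
          have hdiag2 : (1 - P) i i = ((1 - t i : ℝ) : ℂ) := by
            rw [Matrix.sub_apply, Matrix.one_apply_eq, hPii]
            push_cast
            ring
          rw [hdiag2] at hdiag
          have := Complex.ofReal_inj.mp hdiag
          have h0 : 0 ≤ ∑ j, Complex.normSq ((1 - P) j i) :=
            Finset.sum_nonneg fun j _ => Complex.normSq_nonneg _
          linarith [this ▸ h0]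
        have htsum : ∑ i, t i = L := by
          have h1 : P.trace = ((L : ℕ) : ℂ) := by
            rw [hP, Matrix.trace_mul_comm, hUU, Matrix.trace_one]
            simp
          have h2 : P.trace = ((∑ i, t i : ℝ) : ℂ) := by
            rw [Matrix.trace]
            push_cast
            apply Finset.sum_congr rfl
            intro i _
            rw [← hPii i]
            rfl
          rw [h2] at h1
          exact_mod_cast h1
        have hg0 : ∀ i, 0 ≤ g i := fun i => by
          have h1 := hpos i
          have h2 := hec i
          rw [hg]
          positivity
        have hganti : ∀ i j : Fin M, i ≤ j → g j ≤ g i := by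
          intro i j hij
          have ha := hpos j
          have hb := hpos i
          have hab := hdec i j hij
          have key : ∀ a b : ℝ, 0 < a → a ≤ b → a ^ 2 / (a + c) ≤ b ^ 2 / (b + c) := by
            intro a b ha hab
            have hb : 0 < b := lt_of_lt_of_le ha hab
            rw [div_le_div_iff₀ (by positivity) (by positivity)]
            nlinarith [mul_nonneg (mul_pos ha hb).le (sub_nonneg.mpr hab),
              mul_nonneg hcpos.le (mul_nonneg (sub_nonneg.mpr hab)
                (by positivity : (0:ℝ) ≤ a + b))]
          exact key (lam j) (lam i) ha hab
        have hfinal : ∑ i, g i * t i ≤ s := by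
          rw [hs]
          exact aux_sum16 M L hLM g t hg0 hganti ht0 ht1 htsum
        have htrGP : (G * P).trace = ((∑ i, g i * t i : ℝ) : ℂ) := by
          rw [Matrix.trace, Complex.ofReal_sum]
          apply Finset.sum_congr rfl
          intro i _
          rw [Matrix.diag_apply, hG, Matrix.diagonal_mul, hPii i, Complex.ofReal_mul]
        rw [htrU, htrGP]
        exact Complex.real_le_real.mpr hfinal
      exact sub_le_sub_left hkey Λ.trace
  · -- equality part
      have hd0 : ∀ i, (lam i : ℂ) ≠ 0 := fun i => Complex.ofReal_ne_zero.mpr (hpos i).ne'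
      have hΛinv : Λ⁻¹ = Matrix.diagonal fun i => ((lam i : ℂ))⁻¹ := by
        rw [hΛ]
        apply Matrix.inv_eq_right_inv
        rw [Matrix.diagonal_mul_diagonal]
        have h' : (fun i => (lam i : ℂ) * (lam i : ℂ)⁻¹) = fun _ => (1 : ℂ) :=
          funext fun i => mul_inv_cancel₀ (hd0 i)
        rw [h', Matrix.diagonal_one]
      have hP0 : V₀ * V₀ᴴ = Matrix.diagonal (fun i : Fin M => if (i : ℕ) < L then (1 : ℂ) else 0) := by
        ext i k
        simp only [Matrix.mul_apply, hV₀, Matrix.conjTranspose_apply, Matrix.of_apply]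
        by_cases hik : i = k
        · subst hik
          simp only [Matrix.diagonal_apply_eq]
          by_cases hiL : (i : ℕ) < L
          · rw [Finset.sum_eq_single (⟨(i : ℕ), hiL⟩ : Fin L)]
            · simp [hiL]
            · intro j _ hj
              have : (i : ℕ) ≠ (j : ℕ) := fun h => hj (by ext; simp [← h])
              simp [this]
            · simp
          · rw [if_neg hiL, Finset.sum_eq_zero]
            intro j _
            have : (i : ℕ) ≠ (j : ℕ) := fun h => hiL (h ▸ j.isLt)
            simp [this]
        · rw [Matrix.diagonal_apply_ne _ hik, Finset.sum_eq_zero]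
          intro j _
          by_cases h1 : (i : ℕ) = (j : ℕ)
          · have h2 : (k : ℕ) ≠ (j : ℕ) := fun h => hik (by ext; rw [h1, h])
            simp [h2]
          · simp [h1]
      set d : Fin M → ℝ := fun i => (lam i)⁻¹ + if (i : ℕ) < L then ρ else 0 with hdd
      have hdpos : ∀ i, 0 < d i := fun i => by
        have h1 := hpos i
        dsimp [d]; split
        · positivity
        · simpa using inv_pos.mpr h1
      have hA0 : Λ⁻¹ + (ρ : ℂ) • (V₀ * V₀ᴴ) = Matrix.diagonal fun i => (d i : ℂ) := by
        rw [hΛinv, hP0]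
        ext i j
        by_cases hij : i = j
        · subst hij
          simp only [Matrix.add_apply, Matrix.smul_apply, Matrix.diagonal_apply_eq, d]
          push_cast
          split <;> simp
        · simp [Matrix.add_apply, Matrix.smul_apply, Matrix.diagonal_apply_ne _ hij]
      have hA0inv : (Λ⁻¹ + (ρ : ℂ) • (V₀ * V₀ᴴ))⁻¹ = Matrix.diagonal fun i => ((d i : ℂ))⁻¹ := by
        rw [hA0]
        apply Matrix.inv_eq_right_inv
        rw [Matrix.diagonal_mul_diagonal]
        have h' : (fun i => (d i : ℂ) * (d i : ℂ)⁻¹) = fun _ => (1 : ℂ) :=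
          funext fun i => mul_inv_cancel₀ (Complex.ofReal_ne_zero.mpr (hdpos i).ne')
        rw [h', Matrix.diagonal_one]
      rw [hA0inv, hΛ, Matrix.trace_diagonal, Matrix.trace_diagonal]
      have : ∀ i : Fin M, ((d i : ℂ))⁻¹ = ((d i)⁻¹ : ℝ) := fun i => by push_cast; ring
      simp_rw [this]
      rw [← Complex.ofReal_sum, ← Complex.ofReal_sum, ← Complex.ofReal_sub]
      rw [Complex.ofReal_inj]
      rw [eq_sub_iff_add_eq, Finset.sum_filter, ← Finset.sum_add_distrib]
      apply Finset.sum_congr rfl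
      intro i _
      have h1 := hpos i
      dsimp [d]
      split
      · have h2 : lam i + 1/ρ > 0 := by positivity
        field_simp
        ring
      · simp
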